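/- arXiv:1910.12683 — 2 statements merged into one kernel-verified Lean document; each statement's English description precedes it below -/
import Mathlib

section
/- If a finite group G is relative almost monomial with respect to a normal subgroup N ⊴ G, then the quotient group G/N is almost monomial. -/
open scoped Classical

noncomputable section

/-- The inner product of two class functions on a finite group. -/
def cdot (G : Type*) [Group G] [Finite G] (f h : G → ℂ) : ℂ :=
  (Nat.card G : ℂ)⁻¹ * ∑ᶠ g : G, f g * (starRingEnd ℂ) (h g)

/-- `f` is the character of a finite-dimensional complex representation of `G`. -/
def IsChar (G : Type*) [Group G] (f : G → ℂ) : Prop :=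
  ∃ (n : ℕ) (ρ : G →* Matrix.GeneralLinearGroup (Fin n) ℂ),
    f = fun g => Matrix.trace ((ρ g : Matrix (Fin n) (Fin n) ℂ))

/-- `f` is a linear (degree one) character of `G`. -/
def IsLinearChar (G : Type*) [Group G] (f : G → ℂ) : Prop :=
  ∃ ρ : G →* ℂˣ, f = fun g => (ρ g : ℂ)

/-- `f` is an irreducible character of `G`: a character of norm one. -/
def IsIrrChar (G : Type*) [Group G] [Finite G] (f : G → ℂ) : Prop :=
  IsChar G f ∧ cdot G f f = 1

/-- The class function on `G` induced from a class function on a subgroup `H`. -/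
def ind {G : Type*} [Group G] [Finite G] (H : Subgroup G) (f : H → ℂ) : G → ℂ :=
  fun g => (Nat.card H : ℂ)⁻¹ *
    ∑ᶠ x : G, if h : x * g * x⁻¹ ∈ H then f ⟨x * g * x⁻¹, h⟩ else 0

/-- Restriction of a class function on `G` to a subgroup `H`. -/
def res {G : Type*} [Group G] (H : Subgroup G) (f : G → ℂ) : H → ℂ := fun x => f x

/-- Restriction of a class function on a subgroup `K` to a smaller subgroup `H ≤ K`. -/
def resTo {G : Type*} [Group G] {K H : Subgroup G} (hHK : H ≤ K) (f : K → ℂ) : H → ℂ :=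
  fun x => f ⟨x.1, hHK x.2⟩

/-- Induction of a class function from a subgroup `H` to a larger subgroup `K`. -/
def indTo {G : Type*} [Group G] [Finite G] (K H : Subgroup G) (f : H → ℂ) : K → ℂ :=
  ind (H.subgroupOf K) fun y => f ⟨y.1.1, Subgroup.mem_subgroupOf.mp y.2⟩

/-- `G` is almost monomial. -/
def IsAlmostMonomial (G : Type*) [Group G] [Finite G] : Prop :=
  ∀ χ φ : G → ℂ, IsIrrChar G χ → IsIrrChar G φ → χ ≠ φ →
    ∃ (H : Subgroup G) (l : H → ℂ), IsLinearChar H l ∧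
      cdot G (ind H l) χ ≠ 0 ∧ cdot G (ind H l) φ = 0

/-- `G` is relative almost monomial with respect to the (normal) subgroup `N`. -/
def IsRelAlmostMonomial (G : Type*) [Group G] [Finite G] (N : Subgroup G) : Prop :=
  ∀ χ φ : G → ℂ, IsIrrChar G χ → IsIrrChar G φ → χ ≠ φ →
    ∃ (H : Subgroup G) (hNH : N ≤ H) (ψ : H → ℂ), IsIrrChar H ψ ∧
      IsIrrChar N (resTo hNH ψ) ∧
      cdot G (ind H ψ) χ ≠ 0 ∧ cdot G (ind H ψ) φ = 0

/-- `H` is a subnormal subgroup of `G`. -/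
def IsSubnormalSubgroup (G : Type*) [Group G] (H : Subgroup G) : Prop :=
  ∃ (n : ℕ) (c : Fin (n + 1) → Subgroup G), c 0 = H ∧ c (Fin.last n) = ⊤ ∧
    ∀ i : Fin n, ((c i.castSucc).subgroupOf (c i.succ)).Normal

/-- `G` is normally almost monomial. -/
def IsNormallyAlmostMonomial (G : Type*) [Group G] [Finite G] : Prop :=
  ∀ χ φ : G → ℂ, IsIrrChar G χ → IsIrrChar G φ → χ ≠ φ →
    ∃ (H : Subgroup G), H.Normal ∧ ∃ l : H → ℂ, IsLinearChar H l ∧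
      cdot G (ind H l) χ ≠ 0 ∧ cdot G (ind H l) φ = 0

/-- `G` is subnormally almost monomial. -/
def IsSubnormallyAlmostMonomial (G : Type*) [Group G] [Finite G] : Prop :=
  ∀ χ φ : G → ℂ, IsIrrChar G χ → IsIrrChar G φ → χ ≠ φ →
    ∃ (H : Subgroup G), IsSubnormalSubgroup G H ∧ ∃ l : H → ℂ, IsLinearChar H l ∧
      cdot G (ind H l) χ ≠ 0 ∧ cdot G (ind H l) φ = 0

/-- `G` is quasi-monomial. -/
def IsQuasiMonomial (G : Type*) [Group G] [Finite G] : Prop :=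
  ∀ χ : G → ℂ, IsIrrChar G χ → ∃ (H : Subgroup G) (l : H → ℂ) (d : ℕ),
    IsLinearChar H l ∧ 1 ≤ d ∧ ind H l = fun g => (d : ℂ) * χ g

/-- The set of irreducible characters of `G`. -/
def IrrSet (G : Type*) [Group G] [Finite G] : Set (G → ℂ) := {χ | IsIrrChar G χ}

/-- `f` belongs to the semigroup `M(G)` generated by monomial characters. -/
def InMG (G : Type*) [Group G] [Finite G] (f : G → ℂ) : Prop :=
  ∃ (k : ℕ) (H : Fin (k + 1) → Subgroup G) (l : ∀ i, (H i) → ℂ),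
    (∀ i, IsLinearChar (H i) (l i)) ∧ f = fun g => ∑ i, ind (H i) (l i) g

/-- The set of irreducible constituents of a class function `f`. -/
def Cons (G : Type*) [Group G] [Finite G] (f : G → ℂ) : Set (G → ℂ) :=
  {φ | IsIrrChar G φ ∧ cdot G φ f ≠ 0}

/-- `L_t(G)`: the number of constituent-sets of size `t` of characters in `M(G)`. -/
def Lt (G : Type*) [Group G] [Finite G] (t : ℕ) : ℕ :=
  Nat.card {S : Set (G → ℂ) // ∃ f, InMG G f ∧ Cons G f = S ∧ Nat.card S = t}

end


section AuxLemmas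

lemma sum_dite_subgroup {G : Type*} [Group G] [Fintype G] (H : Subgroup G) [Fintype H]
    (F : H → ℂ) :
    ∑ g : G, (if h : g ∈ H then F ⟨g, h⟩ else 0) = ∑ x : H, F x := by
  classical
  rw [show (∑ g : G, (if h : g ∈ H then F ⟨g, h⟩ else 0))
      = ∑ g ∈ Finset.univ.filter (· ∈ H), (if h : g ∈ H then F ⟨g, h⟩ else 0) by
    refine (Finset.sum_filter_of_ne ?_).symm
    intro x _ hx
    by_contra hm
    rw [dif_neg hm] at hx; exact hx rfl]
  rw [Finset.sum_subtype (p := (· ∈ H)) (Finset.univ.filter (· ∈ H)) (by simp)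
    (fun g => if h : g ∈ H then F ⟨g, h⟩ else 0)]
  exact Finset.sum_congr rfl fun x _ => dif_pos x.2

lemma frob {G : Type*} [Group G] [Finite G] (H : Subgroup G) (f : H → ℂ) (χ : G → ℂ)
    (hχ : ∀ x g : G, χ (x * g * x⁻¹) = χ g) :
    cdot G (ind H f) χ = cdot H f (res H χ) := by
  have := Fintype.ofFinite G
  have : Fintype H := Fintype.ofFinite H
  have hG0 : (Nat.card G : ℂ) ≠ 0 := Nat.cast_ne_zero.mpr Nat.card_pos.ne'
  unfold cdot ind res
  rw [finsum_eq_sum_of_fintype, finsum_eq_sum_of_fintype]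
  simp_rw [finsum_eq_sum_of_fintype]
  have key : ∀ x : G, ∑ g : G,
      (if h : x * g * x⁻¹ ∈ H then f ⟨x * g * x⁻¹, h⟩ else 0) * (starRingEnd ℂ) (χ g)
      = ∑ y : H, f y * (starRingEnd ℂ) (χ y) := by
    intro x
    have step : ∑ g : G,
        (if h : x * g * x⁻¹ ∈ H then f ⟨x * g * x⁻¹, h⟩ else 0) * (starRingEnd ℂ) (χ g)
        = ∑ g : G, (if h : g ∈ H then f ⟨g, h⟩ * (starRingEnd ℂ) (χ g) else 0) := by
      refine Fintype.sum_equiv (MulAut.conj x).toEquiv _ _ fun g => ?_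
      have h1 : (MulAut.conj x).toEquiv g = x * g * x⁻¹ := rfl
      rw [h1, hχ x g]
      split_ifs with hh
      · rfl
      · rw [zero_mul]
    rw [step]
    exact sum_dite_subgroup H (fun y : H => f y * (starRingEnd ℂ) (χ y))
  have e1 : ∀ g : G, ((Nat.card H : ℂ)⁻¹ *
        ∑ x : G, (if h : x * g * x⁻¹ ∈ H then f ⟨x * g * x⁻¹, h⟩ else 0)) * (starRingEnd ℂ) (χ g)
      = (Nat.card H : ℂ)⁻¹ *
        ∑ x : G, (if h : x * g * x⁻¹ ∈ H then f ⟨x * g * x⁻¹, h⟩ else 0) * (starRingEnd ℂ) (χ g) := by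
    intro g
    rw [mul_assoc, Finset.sum_mul]
  simp_rw [e1, ← Finset.mul_sum]
  rw [Finset.sum_comm]
  simp_rw [key]
  rw [Finset.sum_const, Finset.card_univ, nsmul_eq_mul,
    show ((Fintype.card G : ℂ)) = (Nat.card G : ℂ) by rw [Nat.card_eq_fintype_card]]
  field_simp

lemma isChar_classFun {G : Type*} [Group G] {f : G → ℂ} (hf : IsChar G f) :
    ∀ x g : G, f (x * g * x⁻¹) = f g := by
  obtain ⟨n, ρ, rfl⟩ := hf
  intro x g
  simp only [map_mul]
  rw [show ((ρ x * ρ g * ρ x⁻¹ : Matrix.GeneralLinearGroup (Fin n) ℂ) : Matrix (Fin n) (Fin n) ℂ)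
      = (ρ x : Matrix (Fin n) (Fin n) ℂ) * (ρ g) * (ρ x⁻¹) from rfl]
  rw [Matrix.trace_mul_cycle]
  rw [show ((ρ x⁻¹ : Matrix.GeneralLinearGroup (Fin n) ℂ) : Matrix (Fin n) (Fin n) ℂ)
      * (ρ x) = ((ρ x⁻¹ * ρ x : Matrix.GeneralLinearGroup (Fin n) ℂ) : Matrix (Fin n) (Fin n) ℂ) from rfl]
  rw [← map_mul, inv_mul_cancel, map_one]
  simp

lemma card_fiber {A B : Type*} [Group A] [Group B]
    (φ : A →* B) (hs : Function.Surjective φ) (b : B) :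
    Nat.card {a // φ a = b} = Nat.card φ.ker := by
  obtain ⟨a₀, ha₀⟩ := hs b
  refine Nat.card_congr (Equiv.mk
    (fun a => ⟨a₀⁻¹ * a.1, by simp [MonoidHom.mem_ker, a.2, ha₀]⟩)
    (fun k => ⟨a₀ * k.1, by
      have := k.2
      rw [MonoidHom.mem_ker] at this
      simp [this, ha₀]⟩)
    (fun a => by simp) (fun k => by simp))

lemma sum_comp_surj {A B : Type*} [Group A] [Group B] [Fintype A] [Fintype B]
    (φ : A →* B) (hs : Function.Surjective φ) (F : B → ℂ) :
    ∑ a : A, F (φ a) = (Nat.card φ.ker : ℂ) * ∑ b : B, F b := by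
  classical
  rw [← Fintype.sum_fiberwise φ (fun a => F (φ a))]
  rw [Finset.mul_sum]
  refine Finset.sum_congr rfl fun b _ => ?_
  rw [show ∑ a : {a // φ a = b}, F (φ a.1) = ∑ _a : {a // φ a = b}, F b from
    Finset.sum_congr rfl fun a _ => by rw [a.2]]
  rw [Finset.sum_const, Finset.card_univ, nsmul_eq_mul, ← card_fiber φ hs b,
    Nat.card_eq_fintype_card]

lemma card_comp {A B : Type*} [Group A] [Finite A] [Group B] (φ : A →* B)
    (hs : Function.Surjective φ) :
    Nat.card A = Nat.card B * Nat.card φ.ker := by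
  have : Finite B := Finite.of_surjective φ hs
  rw [← Nat.card_congr (QuotientGroup.quotientKerEquivOfSurjective φ hs).toEquiv]
  exact Subgroup.card_eq_card_quotient_mul_card_subgroup φ.ker

lemma cdot_comp {A B : Type*} [Group A] [Finite A] [Group B] [Finite B] (φ : A →* B)
    (hs : Function.Surjective φ) (f g : B → ℂ) :
    cdot A (fun a => f (φ a)) (fun a => g (φ a)) = cdot B f g := by
  have := Fintype.ofFinite A
  have := Fintype.ofFinite B
  have hK : (Nat.card φ.ker : ℂ) ≠ 0 := Nat.cast_ne_zero.mpr Nat.card_pos.ne'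
  have hB : (Nat.card B : ℂ) ≠ 0 := Nat.cast_ne_zero.mpr Nat.card_pos.ne'
  unfold cdot
  rw [finsum_eq_sum_of_fintype, finsum_eq_sum_of_fintype,
    sum_comp_surj φ hs (fun b => f b * (starRingEnd ℂ) (g b)), card_comp φ hs,
    Nat.cast_mul, mul_inv]
  rw [mul_assoc, ← mul_assoc ((Nat.card φ.ker : ℂ))⁻¹, inv_mul_cancel₀ hK, one_mul]

lemma trace_idem {n : ℕ} (P : Matrix (Fin n) (Fin n) ℂ) (hP : P * P = P) (h0 : P ≠ 0) :
    ∃ k : ℕ, 1 ≤ k ∧ P.trace = k := by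
  set f : (Fin n → ℂ) →ₗ[ℂ] (Fin n → ℂ) := Matrix.toLin' P with hf
  have hff : f ∘ₗ f = f := by rw [hf, ← Matrix.toLin'_mul, hP]
  obtain ⟨p, hp⟩ := (LinearMap.isProj_iff_isIdempotentElem f).mpr hff
  have htr : LinearMap.trace ℂ _ f = (Module.finrank ℂ p : ℂ) := hp.trace
  have htr2 : P.trace = LinearMap.trace ℂ _ f := by
    rw [hf, LinearMap.trace_eq_matrix_trace ℂ (Pi.basisFun ℂ (Fin n)),
      LinearMap.toMatrix_eq_toMatrix', LinearMap.toMatrix'_toLin']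
  refine ⟨Module.finrank ℂ p, ?_, by rw [htr2, htr]⟩
  rw [Nat.one_le_iff_ne_zero]
  intro hzero
  have hpbot : p = ⊥ := Submodule.finrank_eq_zero.mp hzero
  have hf0 : f = 0 := by
    apply LinearMap.ext
    intro v
    have := hp.map_mem v
    rw [hpbot, Submodule.mem_bot] at this
    simpa using this
  apply h0
  have : LinearMap.toMatrix' f = LinearMap.toMatrix' (0 : (Fin n → ℂ) →ₗ[ℂ] (Fin n → ℂ)) := by
    rw [hf0]
  rw [hf, LinearMap.toMatrix'_toLin', map_zero] at this
  exact this

lemma key_descent {G : Type*} [Group G] [Finite G] {N H : Subgroup G} (hNH : N ≤ H)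
    (ψ : H → ℂ) (hψ : IsIrrChar H ψ) (hres : cdot N (resTo hNH ψ) (resTo hNH ψ) = 1)
    (ξ : G → ℂ) (hinv : ∀ g m : G, m ∈ N → ξ (g * m) = ξ g)
    (hQne : cdot H ψ (res H ξ) ≠ 0) :
    ∃ μ : H →* ℂˣ, (ψ = fun h => (μ h : ℂ)) ∧
      ∀ m : G, ∀ hm : m ∈ N, μ ⟨m, hNH hm⟩ = 1 := by

  have := Fintype.ofFinite G
  have : Fintype H := Fintype.ofFinite H
  have : Fintype N := Fintype.ofFinite N
  have hcN : (Nat.card N : ℂ) ≠ 0 := Nat.cast_ne_zero.mpr Nat.card_pos.ne'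
  have hcH : (Nat.card H : ℂ) ≠ 0 := Nat.cast_ne_zero.mpr Nat.card_pos.ne'
  obtain ⟨nn, ρ, hψeq⟩ := hψ.1
  set ι : N →* H := Subgroup.inclusion hNH with hι
  set P : Matrix (Fin nn) (Fin nn) ℂ :=
    (Nat.card N : ℂ)⁻¹ • ∑ m : N, ((ρ (ι m) : Matrix (Fin nn) (Fin nn) ℂ)) with hP
  set Q : Matrix (Fin nn) (Fin nn) ℂ :=
    (Nat.card H : ℂ)⁻¹ • ∑ x : H, (starRingEnd ℂ) (ξ x.1) • ((ρ x : Matrix (Fin nn) (Fin nn) ℂ)) with hQ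
  -- members multiply into P
  have hmulP : ∀ m : N, P * (ρ (ι m) : Matrix (Fin nn) (Fin nn) ℂ) = P := by
    intro m
    rw [hP, smul_mul_assoc, Finset.sum_mul]
    congr 1
    refine Fintype.sum_equiv (Equiv.mulRight m) _ _ fun m' => ?_
    show (ρ (ι m') : Matrix (Fin nn) (Fin nn) ℂ) * (ρ (ι m) : Matrix (Fin nn) (Fin nn) ℂ)
      = (ρ (ι (m' * m)) : Matrix (Fin nn) (Fin nn) ℂ)
    rw [map_mul, map_mul, Units.val_mul]
  have hPP : P * P = P := by
    nth_rewrite 2 [hP]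
    rw [mul_smul_comm, Finset.mul_sum]
    simp_rw [hmulP]
    rw [Finset.sum_const, Finset.card_univ, ← Nat.card_eq_fintype_card,
      ← Nat.cast_smul_eq_nsmul ℂ, smul_smul, inv_mul_cancel₀ hcN, one_smul]
  have hmulQ : ∀ m : N, Q * (ρ (ι m) : Matrix (Fin nn) (Fin nn) ℂ) = Q := by
    intro m
    rw [hQ, smul_mul_assoc, Finset.sum_mul]
    congr 1
    refine Fintype.sum_equiv (Equiv.mulRight (ι m)) _ _ fun x => ?_
    show ((starRingEnd ℂ) (ξ x.1) • (ρ x : Matrix (Fin nn) (Fin nn) ℂ))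
        * (ρ (ι m) : Matrix (Fin nn) (Fin nn) ℂ)
      = (starRingEnd ℂ) (ξ ((x * ι m : H) : G)) • (ρ (x * ι m) : Matrix (Fin nn) (Fin nn) ℂ)
    have : ξ ((x * ι m : H) : G) = ξ x.1 := by
      have : ((x * ι m : H) : G) = (x : G) * (m : G) := rfl
      rw [this, hinv _ _ m.2]
    rw [this, smul_mul_assoc, map_mul, Units.val_mul]
  have hQP : Q * P = Q := by
    conv_lhs => rw [hP]
    rw [mul_smul_comm, Finset.mul_sum]
    simp_rw [hmulQ]
    rw [Finset.sum_const, Finset.card_univ, ← Nat.card_eq_fintype_card,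
      ← Nat.cast_smul_eq_nsmul ℂ, smul_smul, inv_mul_cancel₀ hcN, one_smul]
  have htrQ : Q.trace = cdot H ψ (res H ξ) := by
    rw [hQ, Matrix.trace_smul, Matrix.trace_sum]
    unfold cdot res
    rw [finsum_eq_sum_of_fintype]
    rw [smul_eq_mul]
    congr 1
    refine Finset.sum_congr rfl fun x _ => ?_
    rw [Matrix.trace_smul, smul_eq_mul, hψeq]
    ring
  have hQ0 : Q ≠ 0 := by
    intro hq
    apply hQne
    rw [← htrQ, hq, Matrix.trace_zero]
  have hP0 : P ≠ 0 := by
    intro hp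
    apply hQ0
    rw [← hQP, hp, mul_zero]
  obtain ⟨k, hk1, hk⟩ := trace_idem P hPP hP0
  have htP : P.trace = (Nat.card N : ℂ)⁻¹ * ∑ m : N, ψ (ι m) := by
    rw [hP, Matrix.trace_smul, Matrix.trace_sum, smul_eq_mul]
    congr 1
    exact Finset.sum_congr rfl fun m _ => by rw [hψeq]
  -- the quadratic computation
  have hresTo : ∀ m : N, resTo hNH ψ m = ψ (ι m) := fun m => rfl
  have hsum1 : (Nat.card N : ℂ)⁻¹ * ∑ m : N, ψ (ι m) * (starRingEnd ℂ) (ψ (ι m)) = 1 := by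
    rw [← hres]
    unfold cdot
    rw [finsum_eq_sum_of_fintype]
    rfl
  have hS : (Nat.card N : ℂ)⁻¹ * ∑ m : N, (ψ (ι m) - 1) * (starRingEnd ℂ) (ψ (ι m) - 1)
      = 2 - 2 * (k : ℂ) := by
    have expand : ∀ m : N, (ψ (ι m) - 1) * (starRingEnd ℂ) (ψ (ι m) - 1)
        = ψ (ι m) * (starRingEnd ℂ) (ψ (ι m)) - ψ (ι m) - (starRingEnd ℂ) (ψ (ι m)) + 1 := by
      intro m; rw [map_sub, map_one]; ring
    simp_rw [expand]
    rw [Finset.sum_add_distrib, Finset.sum_sub_distrib, Finset.sum_sub_distrib]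
    have hB : (Nat.card N : ℂ)⁻¹ * ∑ m : N, ψ (ι m) = (k : ℂ) := by rw [← htP, hk]
    have hBc : (Nat.card N : ℂ)⁻¹ * ∑ m : N, (starRingEnd ℂ) (ψ (ι m)) = (k : ℂ) := by
      rw [← map_sum]
      have : ((Nat.card N : ℂ))⁻¹ = (starRingEnd ℂ) ((Nat.card N : ℂ))⁻¹ := by
        rw [map_inv₀, Complex.conj_natCast]
      rw [this, ← map_mul, hB]
      rw [Complex.conj_natCast]
    rw [mul_add, mul_sub, mul_sub, hsum1, hB, hBc, Finset.sum_const, Finset.card_univ,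
      nsmul_eq_mul, mul_one, ← Nat.card_eq_fintype_card, inv_mul_cancel₀ hcN]
    ring
  -- real nonneg
  have hreal : ∀ m : N, (ψ (ι m) - 1) * (starRingEnd ℂ) (ψ (ι m) - 1)
      = (Complex.normSq (ψ (ι m) - 1) : ℂ) := fun m => Complex.mul_conj _
  have hS' : ((Nat.card N : ℝ))⁻¹ * ∑ m : N, Complex.normSq (ψ (ι m) - 1) = 2 - 2 * (k : ℝ) := by
    have := hS
    simp_rw [hreal] at this
    rw [← Complex.ofReal_sum] at this
    have h2 : ((((Nat.card N : ℝ))⁻¹ * ∑ m : N, Complex.normSq (ψ (ι m) - 1) : ℝ) : ℂ)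
        = ((2 - 2 * (k : ℝ) : ℝ) : ℂ) := by
      push_cast
      rw [← this]
      norm_num
    exact_mod_cast h2
  have hsumnn : 0 ≤ ((Nat.card N : ℝ))⁻¹ * ∑ m : N, Complex.normSq (ψ (ι m) - 1) := by
    apply mul_nonneg (by positivity)
    exact Finset.sum_nonneg fun m _ => Complex.normSq_nonneg _
  have hk_eq : k = 1 := by
    rw [hS'] at hsumnn
    have hkR : (k : ℝ) ≤ 1 := by linarith
    have hk2 : k ≤ 1 := by exact_mod_cast hkR
    omega
  have hsum0 : ∑ m : ↥N, Complex.normSq (ψ (ι m) - 1) = 0 := by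
    subst hk_eq
    norm_num at hS'
    exact hS'
  have hψι : ∀ m : ↥N, ψ (ι m) = 1 := by
    intro m
    have := (Finset.sum_eq_zero_iff_of_nonneg
      (fun m _ => Complex.normSq_nonneg (ψ (ι m) - 1))).mp hsum0 m (Finset.mem_univ m)
    have := Complex.normSq_eq_zero.mp this
    have := sub_eq_zero.mp this
    exact this
  have hψ1 : ψ 1 = 1 := by rw [← map_one ι]; exact hψι 1
  have hnn : nn = 1 := by
    have h1 : ψ 1 = (nn : ℂ) := by
      rw [hψeq]
      simp only [map_one]
      rw [show ((1 : Matrix.GeneralLinearGroup (Fin nn) ℂ) : Matrix (Fin nn) (Fin nn) ℂ)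
        = (1 : Matrix (Fin nn) (Fin nn) ℂ) from rfl, Matrix.trace_one, Fintype.card_fin]
    have : ((nn : ℕ) : ℂ) = ((1 : ℕ) : ℂ) := by rw [← h1, hψ1]; norm_num
    exact_mod_cast this
  subst hnn
  refine ⟨(Units.map (Matrix.detMonoidHom : Matrix (Fin 1) (Fin 1) ℂ →* ℂ)).comp ρ, ?_, ?_⟩
  · rw [hψeq]
    funext g
    rw [MonoidHom.comp_apply]
    rw [show ((Units.map (Matrix.detMonoidHom : Matrix (Fin 1) (Fin 1) ℂ →* ℂ)) (ρ g) : ℂ)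
      = Matrix.det ((ρ g : Matrix (Fin 1) (Fin 1) ℂ)) from rfl]
    rw [Matrix.det_fin_one, Matrix.trace_fin_one]
  · intro m hm
    have h2 := hψι ⟨m, hm⟩
    rw [hψeq] at h2
    apply Units.ext
    rw [MonoidHom.comp_apply]
    rw [show ((Units.map (Matrix.detMonoidHom : Matrix (Fin 1) (Fin 1) ℂ →* ℂ))
        (ρ ⟨m, hNH hm⟩) : ℂ)
      = Matrix.det ((ρ ⟨m, hNH hm⟩ : Matrix (Fin 1) (Fin 1) ℂ)) from rfl]
    rw [Matrix.det_fin_one,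
      ← Matrix.trace_fin_one ((ρ ⟨m, hNH hm⟩ : Matrix (Fin 1) (Fin 1) ℂ)), Units.val_one]
    exact h2

end AuxLemmas

theorem stmt1 (G : Type*) [Group G] [Finite G] (N : Subgroup G) [N.Normal]
    (h : IsRelAlmostMonomial G N) : IsAlmostMonomial (G ⧸ N) := by
  intro χ φ hχ hφ hne
  set π : G →* G ⧸ N := QuotientGroup.mk' N with hπ
  have hπs : Function.Surjective π := QuotientGroup.mk'_surjective N
  have lift : ∀ f : G ⧸ N → ℂ, IsIrrChar (G ⧸ N) f → IsIrrChar G (fun g => f (π g)) := by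
    intro f hf
    constructor
    · obtain ⟨n, ρ, hfe⟩ := hf.1
      exact ⟨n, ρ.comp π, by funext g; rw [hfe]; rfl⟩
    · rw [cdot_comp π hπs f f]
      exact hf.2
  have hχ' := lift χ hχ
  have hφ' := lift φ hφ
  have hne' : (fun g => χ (π g)) ≠ (fun g => φ (π g)) := by
    intro e
    apply hne
    funext q
    obtain ⟨g, rfl⟩ := hπs q
    exact congrFun e g
  obtain ⟨H, hNH, ψ, hψ, hψN, hc1, hc2⟩ := h _ _ hχ' hφ' hne'
  rw [frob H ψ _ (isChar_classFun hχ'.1)] at hc1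
  rw [frob H ψ _ (isChar_classFun hφ'.1)] at hc2
  have hπgm : ∀ g m : G, m ∈ N → π (g * m) = π g := by
    intro g m hm
    rw [map_mul]
    have hm1 : π m = 1 := by
      rw [← MonoidHom.mem_ker, hπ, QuotientGroup.ker_mk']
      exact hm
    rw [hm1, mul_one]
  obtain ⟨μ, hμψ, hμN⟩ := key_descent hNH ψ hψ hψN.2 (fun g => χ (π g))
    (fun g m hm => by show χ (π (g * m)) = χ (π g); rw [hπgm g m hm]) hc1
  set H' : Subgroup (G ⧸ N) := H.map π with hH'
  set φ₀ : H →* H' := π.subgroupMap H with hφ₀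
  have hφ₀s : Function.Surjective φ₀ := π.subgroupMap_surjective H
  have hkerμ : ∀ x : H, x ∈ φ₀.ker → x ∈ μ.ker := by
    intro x hx
    rw [MonoidHom.mem_ker] at hx ⊢
    have hx1 : π x.1 = 1 := congrArg Subtype.val hx
    have hxN : x.1 ∈ N := by
      rw [← QuotientGroup.ker_mk' N, MonoidHom.mem_ker]
      exact hx1
    have hres := hμN x.1 hxN
    rw [show x = (⟨x.1, hNH hxN⟩ : H) from Subtype.ext rfl]
    exact hres
  set e := QuotientGroup.quotientKerEquivOfSurjective φ₀ hφ₀s with he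
  set μh : H' →* ℂˣ := (QuotientGroup.lift φ₀.ker μ hkerμ).comp e.symm.toMonoidHom with hμh
  have hμhφ₀ : ∀ x : H, μh (φ₀ x) = μ x := by
    intro x
    have h1 : e (QuotientGroup.mk x) = φ₀ x := rfl
    rw [hμh, MonoidHom.comp_apply]
    rw [show e.symm.toMonoidHom (φ₀ x) = QuotientGroup.mk x from by
      rw [show e.symm.toMonoidHom (φ₀ x) = e.symm (φ₀ x) from rfl, ← h1,
        MulEquiv.symm_apply_apply]]
    rfl
  have transfer : ∀ f : G ⧸ N → ℂ,
      cdot H ψ (res H (fun g => f (π g))) = cdot H' (fun q => (μh q : ℂ)) (res H' f) := by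
    intro f
    rw [show ψ = fun x : H => (fun q : H' => (μh q : ℂ)) (φ₀ x) from by
      funext x
      rw [hμψ]
      simp only []
      rw [hμhφ₀]]
    rw [show res H (fun g => f (π g)) = fun x : H => (res H' f) (φ₀ x) from rfl]
    exact cdot_comp φ₀ hφ₀s (fun q => ((μh q : ℂˣ) : ℂ)) (res H' f)
  refine ⟨H', (fun q => (μh q : ℂ)), ⟨μh, rfl⟩, ?_, ?_⟩
  · rw [frob H' _ χ (isChar_classFun hχ.1), ← transfer χ]
    exact hc1
  · rw [frob H' _ φ (isChar_classFun hφ.1), ← transfer φ]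
    exact hc2
end

section
/- Every quasi-monomial finite group is almost monomial. -/
open scoped Classical

section Aux

open FDRep Representation Module

variable {G : Type} [Group G]

/-- The representation on `Fin n → ℂ` attached to a matrix representation. -/
noncomputable def matRep (n : ℕ) (ρ : G →* Matrix.GeneralLinearGroup (Fin n) ℂ) :
    Representation ℂ G (Fin n → ℂ) :=
  (Matrix.toLinAlgEquiv' : Matrix (Fin n) (Fin n) ℂ ≃ₐ[ℂ] _).toAlgHom.toMonoidHom.comp
    ((Units.coeHom _).comp ρ)

lemma charMatRep (n : ℕ) (ρ : G →* Matrix.GeneralLinearGroup (Fin n) ℂ) (g : G) :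
    (FDRep.of (matRep n ρ)).character g = Matrix.trace ((ρ g : Matrix (Fin n) (Fin n) ℂ)) := by
  show LinearMap.trace ℂ (Fin n → ℂ) (matRep n ρ g) = _
  rw [LinearMap.trace_eq_matrix_trace ℂ (Pi.basisFun ℂ (Fin n))]
  congr 1
  rw [LinearMap.toMatrix_eq_toMatrix']
  show LinearMap.toMatrix' (Matrix.toLinAlgEquiv' ((ρ g : Matrix (Fin n) (Fin n) ℂ))) = _
  exact LinearMap.toMatrixAlgEquiv'_toLinAlgEquiv' _

lemma cdot_eq {G : Type*} [Group G] [Fintype G] (f h : G → ℂ) :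
    cdot G f h = (Fintype.card G : ℂ)⁻¹ * ∑ g : G, f g * (starRingEnd ℂ) (h g) := by
  rw [cdot, finsum_eq_sum_of_fintype, Nat.card_eq_fintype_card]

lemma key0 (G : Type) [Group G] [Fintype G] (χ φ : G → ℂ) (hχ : IsChar G χ) (hφ : IsChar G φ) :
    ∃ N : ℕ, cdot G χ φ = N := by
  obtain ⟨n, ρ, rfl⟩ := hχ
  obtain ⟨m, σ, rfl⟩ := hφ
  let σc : G →* Matrix.GeneralLinearGroup (Fin m) ℂ :=
    (Units.map (RingHom.mapMatrix (starRingEnd ℂ)).toMonoidHom).comp σ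
  let V : FDRep ℂ G := FDRep.of (matRep n ρ)
  let Wc : FDRep ℂ G := FDRep.of (matRep m σc)
  let W' : FDRep ℂ G := FDRep.of (dual Wc.ρ)
  have hcard : ((Fintype.card G : ℂ)) ≠ 0 := by
    exact_mod_cast Nat.cast_ne_zero.mpr Fintype.card_ne_zero
  letI : Invertible (Fintype.card G : ℂ) := invertibleOfNonzero hcard
  refine ⟨finrank ℂ (invariants (linHom W'.ρ V.ρ)), ?_⟩
  have h1 := FDRep.average_char_eq_finrank_invariants (FDRep.of (linHom W'.ρ V.ρ))
  rw [show (FDRep.of (linHom W'.ρ V.ρ)).ρ = linHom W'.ρ V.ρ from FDRep.of_ρ' _] at h1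
  have h2 : ∀ g : G, (FDRep.of (linHom W'.ρ V.ρ)).character g
      = Matrix.trace ((ρ g : Matrix (Fin n) (Fin n) ℂ)) *
        (starRingEnd ℂ) (Matrix.trace ((σ g : Matrix (Fin m) (Fin m) ℂ))) := by
    intro g
    have hlh := FDRep.char_linHom W' V g
    have hd : W'.character g⁻¹ = Wc.character g := by
      have := FDRep.char_dual Wc g⁻¹
      rw [inv_inv] at this
      exact this
    have hWcg : Wc.character g
        = (starRingEnd ℂ) (Matrix.trace ((σ g : Matrix (Fin m) (Fin m) ℂ))) := by
      rw [show Wc.character g = Matrix.trace ((σc g : Matrix (Fin m) (Fin m) ℂ)) from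
        charMatRep m σc g]
      have : ((σc g : Matrix (Fin m) (Fin m) ℂ)) =
          ((starRingEnd ℂ : ℂ →+* ℂ) : ℂ →+ ℂ).mapMatrix
            ((σ g : Matrix (Fin m) (Fin m) ℂ)) := rfl
      rw [this, AddMonoidHom.mapMatrix_apply, AddMonoidHom.map_trace (starRingEnd ℂ)]
      rfl
    have hVg : V.character g = Matrix.trace ((ρ g : Matrix (Fin n) (Fin n) ℂ)) := charMatRep n ρ g
    rw [hlh, hd, hWcg, hVg, mul_comm]
  have h3 : cdot G (fun g => Matrix.trace ((ρ g : Matrix (Fin n) (Fin n) ℂ)))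
        (fun g => Matrix.trace ((σ g : Matrix (Fin m) (Fin m) ℂ)))
      = ⅟(Fintype.card G : ℂ) • ∑ g : G, (FDRep.of (linHom W'.ρ V.ρ)).character g := by
    rw [cdot_eq, smul_eq_mul, invOf_eq_inv _]
    congr 1
    exact Finset.sum_congr rfl fun g _ => (h2 g).symm
  rw [h3, smul_eq_mul, invOf_eq_inv, ← Nat.card_eq_fintype_card]
  exact h1

lemma key {G : Type*} [Group G] [Finite G] {χ φ : G → ℂ}
    (hχ : IsChar G χ) (hφ : IsChar G φ) : ∃ N : ℕ, cdot G χ φ = N := by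
  obtain ⟨G', _, _, ⟨e⟩⟩ := Finite.exists_type_univ_nonempty_mulEquiv.{_, 0} G
  letI : Fintype G := Fintype.ofFinite G
  have hch : ∀ f : G → ℂ, IsChar G f → IsChar G' (f ∘ e.symm) := by
    rintro f ⟨n, ρ, rfl⟩
    exact ⟨n, ρ.comp e.symm.toMonoidHom, rfl⟩
  have hcd : cdot G χ φ = cdot G' (χ ∘ e.symm) (φ ∘ e.symm) := by
    rw [cdot, cdot, finsum_eq_sum_of_fintype, finsum_eq_sum_of_fintype,
      Nat.card_congr e.toEquiv]
    congr 1
    exact Fintype.sum_equiv e.toEquiv _ _ (fun g => by simp)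
  rw [hcd]
  exact key0 G' _ _ (hch _ hχ) (hch _ hφ)

lemma cdot_conj {G : Type*} [Group G] [Fintype G] (f h : G → ℂ) :
    cdot G h f = (starRingEnd ℂ) (cdot G f h) := by
  rw [cdot_eq, cdot_eq, map_mul, map_inv₀, map_natCast, map_sum]
  congr 1
  refine Finset.sum_congr rfl fun g _ => ?_
  rw [map_mul, Complex.conj_conj]
  ring

lemma cdot_self_re {G : Type*} [Group G] [Fintype G] (f : G → ℂ) (hf : f ≠ 0) :
    0 < (cdot G f f).re := by
  have hc : cdot G f f
      = (((Fintype.card G : ℝ)⁻¹ * ∑ g : G, Complex.normSq (f g) : ℝ) : ℂ) := by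
    rw [cdot_eq]
    push_cast
    congr 1
    exact Finset.sum_congr rfl fun g _ => (Complex.mul_conj (f g))
  rw [hc, Complex.ofReal_re]
  apply mul_pos (by positivity)
  obtain ⟨g, hg⟩ := Function.ne_iff.mp hf
  exact Finset.sum_pos' (fun i _ => Complex.normSq_nonneg _)
    ⟨g, Finset.mem_univ g, Complex.normSq_pos.mpr hg⟩

lemma orth {G : Type*} [Group G] [Finite G] {χ φ : G → ℂ}
    (hχ : IsIrrChar G χ) (hφ : IsIrrChar G φ) (hne : χ ≠ φ) : cdot G χ φ = 0 := by
  letI : Fintype G := Fintype.ofFinite G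
  obtain ⟨N, hN⟩ := key hχ.1 hφ.1
  have hM : cdot G φ χ = (N : ℂ) := by
    rw [cdot_conj, hN]
    simp
  set ψ : G → ℂ := fun g => χ g - φ g with hψdef
  have hψ : ψ ≠ 0 := by
    intro h0
    exact hne (funext fun g => sub_eq_zero.mp (congrFun h0 g))
  have hexp : cdot G ψ ψ = cdot G χ χ - cdot G χ φ - cdot G φ χ + cdot G φ φ := by
    simp only [cdot_eq]
    have hs : ∑ g : G, ψ g * (starRingEnd ℂ) (ψ g)
        = ∑ g : G, (χ g * (starRingEnd ℂ) (χ g) - χ g * (starRingEnd ℂ) (φ g)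
          - φ g * (starRingEnd ℂ) (χ g) + φ g * (starRingEnd ℂ) (φ g)) := by
      refine Finset.sum_congr rfl fun g _ => ?_
      simp only [hψdef, map_sub]
      ring
    rw [hs, Finset.sum_add_distrib, Finset.sum_sub_distrib, Finset.sum_sub_distrib]
    ring
  rw [hχ.2, hφ.2, hN, hM] at hexp
  have hre := cdot_self_re ψ hψ
  rw [hexp] at hre
  have : (0 : ℝ) < 2 - 2 * N := by
    have : ((1 : ℂ) - N - N + 1).re = 2 - 2 * N := by
      simp
      ring
    rw [this] at hre
    exact hre
  have hN0 : N = 0 := by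
    by_contra hN0
    have : (1 : ℝ) ≤ N := by exact_mod_cast Nat.one_le_iff_ne_zero.mpr hN0
    linarith
  rw [hN, hN0, Nat.cast_zero]

lemma cdot_smul {G : Type*} [Group G] [Finite G] (c : ℂ) (f h : G → ℂ) :
    cdot G (fun g => c * f g) h = c * cdot G f h := by
  letI : Fintype G := Fintype.ofFinite G
  rw [cdot_eq, cdot_eq]
  have hs : ∑ g : G, (c * f g) * (starRingEnd ℂ) (h g)
      = c * ∑ g : G, f g * (starRingEnd ℂ) (h g) := by
    rw [Finset.mul_sum]
    exact Finset.sum_congr rfl fun g _ => by ring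
  rw [hs]
  ring

end Aux

theorem stmt18 (G : Type*) [Group G] [Finite G] (h : IsQuasiMonomial G) :
    IsAlmostMonomial G := by
  intro χ φ hχ hφ hne
  obtain ⟨H, l, d, hlin, hd, hind⟩ := h χ hχ
  refine ⟨H, l, hlin, ?_, ?_⟩
  · rw [hind, cdot_smul, hχ.2, mul_one]
    exact_mod_cast Nat.cast_ne_zero.mpr (by omega)
  · rw [hind, cdot_smul, orth hχ hφ hne, mul_zero]
end
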